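/- Let F be a field, Γ an additive abelian group, ε a skew-symmetric bicharacter of Γ, A a Γ-graded associative unital F-algebra, and D a set of homogeneous color derivations of A. Let χ, ψ : D → F be functions with χ(∂) = ψ(∂) = 0 whenever ∂ ∈ D has nonzero degree. Then for all m,n ∈ ℕ, if u ∈ A(χ)^{(m)} is homogeneous and v ∈ A(ψ)^{(n)}, then u·v ∈ A(χ+ψ)^{(m+n)}. -/

import Mathlib

/-- `d` is a homogeneous color derivation of degree `lam` of the `Γ`-graded algebra `A`
(with grading `𝒜`) relative to the bicharacter `ε`. -/
def IsHomColorDer {F : Type*} [Field F] {Γ : Type*} [AddCommGroup Γ]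
    {A : Type*} [Ring A] [Algebra F A]
    (ε : Γ → Γ → F) (𝒜 : Γ → Submodule F A) (lam : Γ) (d : Module.End F A) : Prop :=
  (∀ μ : Γ, ∀ a ∈ 𝒜 μ, d a ∈ 𝒜 (lam + μ)) ∧
  (∀ (l m : Γ) (a b : A), a ∈ 𝒜 l → b ∈ 𝒜 m →
    d (a * b) = d a * b + ε lam l • (a * d b))

/-- The generalized weight space `A(χ)^{(m)}`: the set of `u ∈ A` killed by every
composition `(d₁ − χ(d₁))∘⋯∘(d_{m+1} − χ(d_{m+1}))` with `d₁,…,d_{m+1} ∈ D`. -/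
def wtSpace {F : Type*} [Field F] {A : Type*} [Ring A] [Algebra F A]
    (D : Set (Module.End F A)) (χ : Module.End F A → F) : ℕ → Set A
  | 0 => {u : A | ∀ d ∈ D, d u - χ d • u = 0}
  | n + 1 => {u : A | ∀ d ∈ D, d u - χ d • u ∈ wtSpace D χ n}

section Aux

variable {F : Type*} [Field F] {A : Type*} [Ring A] [Algebra F A]

lemma wtSpace_zero_mem (D : Set (Module.End F A)) (χ : Module.End F A → F) :
    ∀ k, (0 : A) ∈ wtSpace D χ k := by
  intro k
  induction k with
  | zero => intro d hd; simp [wtSpace]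
  | succ n ih => intro d hd; simpa using ih

lemma wtSpace_add_mem (D : Set (Module.End F A)) (χ : Module.End F A → F) :
    ∀ k (u v : A), u ∈ wtSpace D χ k → v ∈ wtSpace D χ k →
      u + v ∈ wtSpace D χ k := by
  intro k
  induction k with
  | zero =>
    intro u v hu hv d hd
    have h : d (u + v) - χ d • (u + v) = (d u - χ d • u) + (d v - χ d • v) := by
      rw [map_add, smul_add]; abel
    rw [h, hu d hd, hv d hd, add_zero]
  | succ n ih =>
    intro u v hu hv d hd
    have h : d (u + v) - χ d • (u + v) = (d u - χ d • u) + (d v - χ d • v) := by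
      rw [map_add, smul_add]; abel
    rw [h]; exact ih _ _ (hu d hd) (hv d hd)

lemma wtSpace_smul_mem (D : Set (Module.End F A)) (χ : Module.End F A → F) :
    ∀ k (c : F) (u : A), u ∈ wtSpace D χ k → c • u ∈ wtSpace D χ k := by
  intro k
  induction k with
  | zero =>
    intro c u hu d hd
    have h : d (c • u) - χ d • (c • u) = c • (d u - χ d • u) := by
      rw [map_smul, smul_sub, smul_comm]
    rw [h, hu d hd, smul_zero]
  | succ n ih =>
    intro c u hu d hd
    have h : d (c • u) - χ d • (c • u) = c • (d u - χ d • u) := by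
      rw [map_smul, smul_sub, smul_comm]
    rw [h]; exact ih _ _ (hu d hd)

/-- Leibniz rule for arbitrary (not necessarily homogeneous) second factor. -/
lemma leibniz_all {Γ : Type*} [AddCommGroup Γ] [DecidableEq Γ]
    (ε : Γ → Γ → F) (𝒜 : Γ → Submodule F A) [GradedAlgebra 𝒜]
    (lam : Γ) (d : Module.End F A) (hd : IsHomColorDer ε 𝒜 lam d)
    (γ : Γ) (u : A) (hu : u ∈ 𝒜 γ) :
    ∀ v : A, d (u * v) = d u * v + ε lam γ • (u * d v) := by
  intro v
  induction v using DirectSum.Decomposition.inductionOn 𝒜 with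
  | zero => simp
  | homogeneous m =>
    exact hd.2 γ _ u m hu m.2
  | add a b ha hb =>
    rw [mul_add, map_add, ha, hb, map_add, mul_add, mul_add, smul_add]
    abel

end Aux

/-- For functions `χ, ψ : D → F` vanishing on derivations of nonzero
degree, a homogeneous `u ∈ A(χ)^{(m)}` and any `v ∈ A(ψ)^{(n)}` satisfy
`u·v ∈ A(χ+ψ)^{(m+n)}`. -/
theorem wtSpace_mul
    {F : Type*} [Field F] {Γ : Type*} [AddCommGroup Γ] [DecidableEq Γ]
    {A : Type*} [Ring A] [Algebra F A]
    (ε : Γ → Γ → F)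
    (hskew : ∀ l m : Γ, ε l m * ε m l = 1)
    (hmul : ∀ l m n : Γ, ε l (m + n) = ε l m * ε l n)
    (𝒜 : Γ → Submodule F A) [GradedAlgebra 𝒜]
    (D : Set (Module.End F A)) (deg : Module.End F A → Γ)
    (hD : ∀ d ∈ D, IsHomColorDer ε 𝒜 (deg d) d)
    (χ ψ : Module.End F A → F)
    (hχ : ∀ d ∈ D, deg d ≠ 0 → χ d = 0)
    (hψ : ∀ d ∈ D, deg d ≠ 0 → ψ d = 0) :
    ∀ (m n : ℕ) (γ : Γ) (u v : A), u ∈ 𝒜 γ → u ≠ 0 →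
      u ∈ wtSpace D χ m → v ∈ wtSpace D ψ n →
      u * v ∈ wtSpace D (χ + ψ) (m + n) := by
  -- ε l 0 = 1 and ε 0 l = 1
  have hone : ∀ l : Γ, ε l 0 = 1 := by
    intro l
    have h0 : ε l 0 ≠ 0 := by
      intro h
      have := hskew l 0
      rw [h, zero_mul] at this
      exact zero_ne_one this
    have h1 : ε l 0 * ε l 0 = ε l 0 * 1 := by
      rw [mul_one]
      have := hmul l 0 0
      rw [add_zero] at this
      exact this.symm
    exact mul_left_cancel₀ h0 h1
  have hone' : ∀ l : Γ, ε 0 l = 1 := by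
    intro l
    have := hskew 0 l
    rw [hone l] at this
    simpa using this
  -- the key identity
  have key : ∀ d ∈ D, ∀ (γ : Γ) (u v : A), u ∈ 𝒜 γ →
      d (u * v) - (χ + ψ) d • (u * v)
        = (d u - χ d • u) * v + ε (deg d) γ • (u * (d v - ψ d • v)) := by
    intro d hd γ u v hu
    have hε1 : ε (deg d) γ * ψ d = ψ d := by
      by_cases h0 : deg d = 0
      · rw [h0, hone' γ, one_mul]
      · rw [hψ d hd h0, mul_zero]
    rw [leibniz_all ε 𝒜 (deg d) d (hD d hd) γ u hu v,
      sub_mul, mul_sub, smul_sub, smul_mul_assoc, mul_smul_comm, smul_smul, hε1,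
      Pi.add_apply, add_smul]
    abel
  -- homogeneity of d u - χ d • u
  have hw : ∀ d ∈ D, ∀ (γ : Γ) (u : A), u ∈ 𝒜 γ →
      d u - χ d • u ∈ 𝒜 (deg d + γ) := by
    intro d hd γ u hu
    refine Submodule.sub_mem _ ((hD d hd).1 γ u hu) ?_
    by_cases h0 : deg d = 0
    · rw [h0, zero_add]; exact Submodule.smul_mem _ _ hu
    · rw [hχ d hd h0, zero_smul]; exact Submodule.zero_mem _
  suffices H : ∀ (k m n : ℕ), m + n = k → ∀ (γ : Γ) (u v : A), u ∈ 𝒜 γ →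
      u ∈ wtSpace D χ m → v ∈ wtSpace D ψ n → u * v ∈ wtSpace D (χ + ψ) k by
    intro m n γ u v hu _ h1 h2
    exact H (m + n) m n rfl γ u v hu h1 h2
  intro k
  induction k with
  | zero =>
    intro m n hmn γ u v hu h1 h2
    obtain ⟨hm, hn⟩ : m = 0 ∧ n = 0 := by omega
    subst hm; subst hn
    intro d hd
    rw [key d hd γ u v hu, h1 d hd, h2 d hd, zero_mul, mul_zero, smul_zero, add_zero]
  | succ k ih =>
    intro m n hmn γ u v hu h1 h2
    intro d hd
    rw [key d hd γ u v hu]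
    have hterm1 : (d u - χ d • u) * v ∈ wtSpace D (χ + ψ) k := by
      match m, h1 with
      | 0, h1 =>
        rw [h1 d hd, zero_mul]
        exact wtSpace_zero_mem D (χ + ψ) k
      | m' + 1, h1 =>
        exact ih m' n (by omega) (deg d + γ) _ v (hw d hd γ u hu) (h1 d hd) h2
    have hterm2 : u * (d v - ψ d • v) ∈ wtSpace D (χ + ψ) k := by
      match n, h2 with
      | 0, h2 =>
        rw [h2 d hd, mul_zero]
        exact wtSpace_zero_mem D (χ + ψ) k
      | n' + 1, h2 =>
        exact ih m n' (by omega) γ u _ hu h1 (h2 d hd)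
    exact wtSpace_add_mem D (χ + ψ) k _ _ hterm1
      (wtSpace_smul_mem D (χ + ψ) k _ _ hterm2)
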